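/- The optimal values of Problem (UB) and Problem (P-full) are equal; that is, allowing wireless energy transfer on all sub-channels simultaneously with wireless information transfer achieves no higher rate than restricting energy transfer to the single best sub-channel at each causally dominating slot. -/

import Mathlib

/-!
STATEMENT 9: the optimal value of the non-orthogonal upper bound Problem (UB)
(with perfect interference cancellation) equals the optimal value of
Problem (P-full), where WET is restricted to the single best sub-channel at
each causally dominating slot.
-/

theorem stmt9
    (K N : ℕ) (hK : 2 ≤ K) (hN : 2 ≤ N)
    (h g : ℕ → ℕ → ℝ)
    (hpos : ∀ k ∈ Finset.Icc 1 K, ∀ n ∈ Finset.Icc 1 N, 0 < h k n ∧ 0 < g k n)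
    (hzero : ∀ k, h k 0 = 0 ∧ g k 0 = 0)
    (Q ζ B1 Γσ : ℝ) (hQ : 0 < Q) (hζ : 0 < ζ) (hB1 : 0 ≤ B1) (hΓσ : 0 < Γσ)
    (PiT : ℕ → ℕ)
    (hPiT : ∀ k ∈ Finset.Icc 1 K, PiT k ∈ Finset.Icc 1 N ∧
      ∀ n ∈ Finset.Icc 1 N, n ≠ PiT k → h k n < h k (PiT k))
    (hdistT : ∀ k ∈ Finset.Icc 1 K, ∀ k' ∈ Finset.Icc 1 K, k ≠ k' →
      h k (PiT k) ≠ h k' (PiT k'))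
    (DT : Finset ℕ)
    (hDT : ∀ k, k ∈ DT ↔ (k ∈ Finset.Icc 1 (K - 1) ∧
      ∀ j, 1 ≤ j → j < k → h j (PiT j) < h k (PiT k)))
    (Pi : ℕ → ℕ)
    (hPiDef : ∀ k, (k ∈ DT → Pi k = PiT k) ∧ (k ∉ DT → Pi k = 0)) :
    sSup {r : ℝ | ∃ q p : ℕ → ℕ → ℝ,
        (∀ k ∈ Finset.Icc 1 K, ∀ n ∈ Finset.Icc 0 N, 0 ≤ q k n ∧ 0 ≤ p k n) ∧
        (∀ n, q K n = 0) ∧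
        (∑ k ∈ Finset.Icc 1 K, ∑ n ∈ Finset.Icc 0 N, q k n ≤ (K : ℝ) * Q) ∧
        (∀ i ∈ Finset.Icc 1 K,
          ∑ k ∈ Finset.Icc 1 i, ∑ n ∈ Finset.Icc 0 N, p k n ≤
            ζ * ∑ k ∈ Finset.Icc 1 (i - 1), ∑ n ∈ Finset.Icc 0 N, h k n * q k n + B1) ∧
        r = (1 / ((K : ℝ) * N)) * ∑ k ∈ Finset.Icc 1 K, ∑ n ∈ Finset.Icc 0 N,
              Real.logb 2 (1 + g k n * p k n / Γσ)}
    = sSup {r : ℝ | ∃ (q : ℕ → ℝ) (p : ℕ → ℕ → ℝ),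
        (∀ k ∈ Finset.Icc 1 K, 0 ≤ q k ∧ (Pi k = 0 → q k = 0)) ∧
        (∀ k ∈ Finset.Icc 1 K, ∀ n ∈ Finset.Icc 0 N, 0 ≤ p k n) ∧
        (∑ k ∈ Finset.Icc 1 K, q k ≤ (K : ℝ) * Q) ∧
        (∀ i ∈ Finset.Icc 1 K,
          ∑ k ∈ Finset.Icc 1 i, ∑ n ∈ Finset.Icc 0 N, p k n ≤
            ζ * ∑ k ∈ Finset.Icc 1 (i - 1), h k (Pi k) * q k + B1) ∧
        r = (1 / ((K : ℝ) * N)) * ∑ k ∈ Finset.Icc 1 K, ∑ n ∈ Finset.Icc 0 N,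
              Real.logb 2 (1 + g k n * p k n / Γσ)} := by
  
  have hK1 : (1:ℕ) ≤ K := le_trans (by norm_num) hK
  have hsubIcc : Finset.Icc 1 (K-1) ⊆ Finset.Icc 1 K :=
    Finset.Icc_subset_Icc_right (Nat.sub_le K 1)
  -- basic facts about f k := h k (PiT k)
  have hfpos : ∀ k ∈ Finset.Icc 1 K, 0 < h k (PiT k) := by
    intro k hk
    exact (hpos k hk _ (hPiT k hk).1).1
  have hfmax : ∀ k ∈ Finset.Icc 1 K, ∀ n ∈ Finset.Icc 0 N, h k n ≤ h k (PiT k) := by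
    intro k hk n hn
    rcases Nat.eq_zero_or_pos n with h0 | h0
    · subst h0; rw [(hzero k).1]; exact (hfpos k hk).le
    · have hn' : n ∈ Finset.Icc 1 N := by
        simp only [Finset.mem_Icc] at hn ⊢; exact ⟨h0, hn.2⟩
      by_cases hne : n = PiT k
      · subst hne; exact le_refl _
      · exact ((hPiT k hk).2 n hn' hne).le
  -- Pi k is always in Icc 0 N, and Pi K = 0
  have hDTmem : ∀ k ∈ DT, k ∈ Finset.Icc 1 K := fun k hk => hsubIcc ((hDT k).1 hk).1
  have hPinotDT : ∀ k, k ∉ DT → Pi k = 0 := fun k hk => (hPiDef k).2 hk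
  have hPiDT : ∀ k ∈ DT, Pi k = PiT k := fun k hk => (hPiDef k).1 hk
  have hKnotDT : K ∉ DT := by
    intro hKDT
    have := ((hDT K).1 hKDT).1
    rw [Finset.mem_Icc] at this
    omega
  have hPiK : Pi K = 0 := hPinotDT K hKnotDT
  have hPinz : ∀ k, Pi k ≠ 0 → (k ∈ DT ∧ Pi k = PiT k ∧ PiT k ∈ Finset.Icc 1 N) := by
    intro k hk
    have hkDT : k ∈ DT := by
      by_contra hco
      exact hk (hPinotDT k hco)
    exact ⟨hkDT, hPiDT k hkDT, (hPiT k (hDTmem k hkDT)).1⟩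
  -- choice of causally dominating maximizer m k for each k
  have hmax : ∀ k : ℕ, ∃ mk ∈ Finset.Icc 1 (max 1 k),
      ∀ j ∈ Finset.Icc 1 (max 1 k), h j (PiT j) ≤ h mk (PiT mk) := by
    intro k
    exact Finset.exists_max_image _ (fun j => h j (PiT j))
      ⟨max 1 k, Finset.mem_Icc.mpr ⟨le_max_left _ _, le_refl _⟩⟩
  choose m hm1 hm2 using hmax
  have hm1' : ∀ k, 1 ≤ k → m k ∈ Finset.Icc 1 k := by
    intro k hk; have := hm1 k; rwa [max_eq_right hk] at this
  have hm2' : ∀ k, 1 ≤ k → ∀ j ∈ Finset.Icc 1 k, h j (PiT j) ≤ h (m k) (PiT (m k)) := by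
    intro k hk; have := hm2 k; rwa [max_eq_right hk] at this
  have hmIcc : ∀ k ∈ Finset.Icc 1 (K-1), m k ∈ Finset.Icc 1 (K-1) := by
    intro k hk
    rw [Finset.mem_Icc] at hk ⊢
    have := Finset.mem_Icc.mp (hm1' k hk.1)
    exact ⟨this.1, le_trans this.2 hk.2⟩
  have hmDT : ∀ k ∈ Finset.Icc 1 (K-1), m k ∈ DT := by
    intro k hk
    rw [hDT]
    refine ⟨hmIcc k hk, ?_⟩
    intro j hj1 hjlt
    have hk1 : 1 ≤ k := (Finset.mem_Icc.mp hk).1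
    have hmk : m k ∈ Finset.Icc 1 k := hm1' k hk1
    have hjk : j ∈ Finset.Icc 1 k := by
      rw [Finset.mem_Icc]
      exact ⟨hj1, le_trans hjlt.le (Finset.mem_Icc.mp hmk).2⟩
    have hle := hm2' k hk1 j hjk
    have hjK : j ∈ Finset.Icc 1 K := by
      rw [Finset.mem_Icc] at hjk ⊢
      exact ⟨hjk.1, le_trans hjk.2 (le_trans (Finset.mem_Icc.mp hk).2 (Nat.sub_le K 1))⟩
    have hmkK : m k ∈ Finset.Icc 1 K := hsubIcc (hmIcc k hk)
    exact lt_of_le_of_ne hle (hdistT j hjK (m k) hmkK (Nat.ne_of_lt hjlt))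
  -- prove the two feasible-value sets are equal
  congr 1
  ext r
  simp only [Set.mem_setOf_eq]
  constructor
  · -- UB feasible value is P-full feasible value
    rintro ⟨q, p, hnn, hqK, hbud, hcaus, hr⟩
    set E : ℕ → ℝ := fun k => ∑ n ∈ Finset.Icc 0 N, h k n * q k n with hE
    have hEnn : ∀ k ∈ Finset.Icc 1 K, 0 ≤ E k := by
      intro k hk
      apply Finset.sum_nonneg
      intro n hn
      rcases Nat.eq_zero_or_pos n with h0 | h0
      · subst h0; rw [(hzero k).1]; simp
      · have hn' : n ∈ Finset.Icc 1 N := by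
          simp only [Finset.mem_Icc] at hn ⊢; exact ⟨h0, hn.2⟩
        exact mul_nonneg (hpos k hk n hn').1.le (hnn k hk n hn).1
    set q' : ℕ → ℝ := fun mm =>
      (∑ k ∈ (Finset.Icc 1 (K-1)).filter (fun k => m k = mm), E k) / h mm (PiT mm)
      with hq'
    have hnum_nn : ∀ mm : ℕ,
        0 ≤ ∑ k ∈ (Finset.Icc 1 (K-1)).filter (fun k => m k = mm), E k := by
      intro mm
      apply Finset.sum_nonneg
      intro k hk
      exact hEnn k (hsubIcc (Finset.mem_filter.mp hk).1)
    have hfilter_empty : ∀ mm, mm ∉ DT →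
        (Finset.Icc 1 (K-1)).filter (fun k => m k = mm) = ∅ := by
      intro mm hmm
      rw [Finset.filter_eq_empty_iff]
      intro k hk hkm
      exact hmm (hkm ▸ hmDT k hk)
    refine ⟨q', p, ?_, fun k hk n hn => (hnn k hk n hn).2, ?_, ?_, hr⟩
    · intro k hk
      constructor
      · exact div_nonneg (hnum_nn k) (hfpos k hk).le
      · intro hPi0
        have hkDT : k ∉ DT := by
          intro hco
          have h1 := hPiDT k hco
          have h2 := (hPiT k (hDTmem k hco)).1
          rw [Finset.mem_Icc] at h2
          omega
        show (∑ k' ∈ (Finset.Icc 1 (K-1)).filter (fun k' => m k' = k), E k') / h k (PiT k) = 0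
        rw [hfilter_empty k hkDT, Finset.sum_empty, zero_div]
    · -- total charging budget
      calc ∑ mm ∈ Finset.Icc 1 K, q' mm
          = ∑ mm ∈ Finset.Icc 1 K,
              ∑ k ∈ (Finset.Icc 1 (K-1)).filter (fun k => m k = mm),
                E k / h mm (PiT mm) := by
            apply Finset.sum_congr rfl
            intro mm _
            show (∑ k ∈ (Finset.Icc 1 (K-1)).filter (fun k => m k = mm), E k)
                / h mm (PiT mm) = _
            rw [Finset.sum_div]
        _ ≤ ∑ mm ∈ Finset.Icc 1 K,
              ∑ k ∈ (Finset.Icc 1 (K-1)).filter (fun k => m k = mm),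
                ∑ n ∈ Finset.Icc 0 N, q k n := by
            apply Finset.sum_le_sum
            intro mm hmm
            apply Finset.sum_le_sum
            intro k hk
            obtain ⟨hkI, hkm⟩ := Finset.mem_filter.mp hk
            have hk1 : 1 ≤ k := (Finset.mem_Icc.mp hkI).1
            have hkK : k ∈ Finset.Icc 1 K := hsubIcc hkI
            have hmmK : mm ∈ Finset.Icc 1 K := hkm ▸ hsubIcc (hmIcc k hkI)
            rw [div_le_iff₀ (hfpos mm hmmK)]
            calc E k = ∑ n ∈ Finset.Icc 0 N, h k n * q k n := rfl
              _ ≤ ∑ n ∈ Finset.Icc 0 N, h mm (PiT mm) * q k n := by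
                  apply Finset.sum_le_sum
                  intro n hn
                  apply mul_le_mul_of_nonneg_right _ (hnn k hkK n hn).1
                  calc h k n ≤ h k (PiT k) := hfmax k hkK n hn
                    _ ≤ h mm (PiT mm) := by
                        rw [← hkm]
                        exact hm2' k hk1 k (Finset.mem_Icc.mpr ⟨hk1, le_refl k⟩)
              _ = (∑ n ∈ Finset.Icc 0 N, q k n) * h mm (PiT mm) := by
                  rw [← Finset.mul_sum, mul_comm]
        _ = ∑ k ∈ Finset.Icc 1 (K-1), ∑ n ∈ Finset.Icc 0 N, q k n := by
            apply Finset.sum_fiberwise_of_maps_to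
            intro k hk
            exact hsubIcc (hmIcc k hk)
        _ ≤ ∑ k ∈ Finset.Icc 1 K, ∑ n ∈ Finset.Icc 0 N, q k n := by
            apply Finset.sum_le_sum_of_subset_of_nonneg hsubIcc
            intro k hk _
            exact Finset.sum_nonneg fun n hn => (hnn k hk n hn).1
        _ ≤ (K : ℝ) * Q := hbud
    · -- energy causality
      intro i hi
      rw [Finset.mem_Icc] at hi
      have hi1K : Finset.Icc 1 (i-1) ⊆ Finset.Icc 1 (K-1) :=
        Finset.Icc_subset_Icc_right (Nat.sub_le_sub_right hi.2 1)
      have key : ∑ k ∈ Finset.Icc 1 (i-1), E k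
          ≤ ∑ mm ∈ Finset.Icc 1 (i-1), h mm (Pi mm) * q' mm := by
        have hterm : ∀ mm ∈ Finset.Icc 1 (i-1),
            h mm (Pi mm) * q' mm
              = ∑ k ∈ (Finset.Icc 1 (K-1)).filter (fun k => m k = mm), E k := by
          intro mm hmm
          by_cases hDTm : mm ∈ DT
          · rw [hPiDT mm hDTm]
            show h mm (PiT mm) * (_ / h mm (PiT mm)) = _
            rw [mul_div_cancel₀ _ (hfpos mm (hsubIcc (hi1K hmm))).ne']
          · rw [hfilter_empty mm hDTm, Finset.sum_empty]
            show h mm (Pi mm) * (_ / h mm (PiT mm)) = 0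
            rw [hfilter_empty mm hDTm, Finset.sum_empty, zero_div, mul_zero]
        rw [Finset.sum_congr rfl hterm]
        have hdouble : ∑ mm ∈ Finset.Icc 1 (i-1),
            ∑ k ∈ (Finset.Icc 1 (K-1)).filter (fun k => m k = mm), E k
            = ∑ k ∈ (Finset.Icc 1 (K-1)).filter
                (fun k => m k ∈ Finset.Icc 1 (i-1)), E k := by
          rw [← Finset.sum_fiberwise_of_maps_to
            (fun k hk => (Finset.mem_filter.mp hk).2) E]
          apply Finset.sum_congr rfl
          intro mm hmm
          apply Finset.sum_congr _ (fun _ _ => rfl)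
          rw [Finset.filter_filter]
          apply Finset.filter_congr
          intro k _
          constructor
          · intro hkm; exact ⟨hkm ▸ hmm, hkm⟩
          · intro hkm; exact hkm.2
        rw [hdouble]
        apply Finset.sum_le_sum_of_subset_of_nonneg
        · intro k hk
          rw [Finset.mem_filter]
          refine ⟨hi1K hk, ?_⟩
          have hk' := Finset.mem_Icc.mp hk
          have hmk := Finset.mem_Icc.mp (hm1' k hk'.1)
          rw [Finset.mem_Icc]
          exact ⟨hmk.1, le_trans hmk.2 hk'.2⟩
        · intro k hk _
          exact hEnn k (hsubIcc (Finset.mem_filter.mp hk).1)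
      calc ∑ k ∈ Finset.Icc 1 i, ∑ n ∈ Finset.Icc 0 N, p k n
          ≤ ζ * ∑ k ∈ Finset.Icc 1 (i-1),
              ∑ n ∈ Finset.Icc 0 N, h k n * q k n + B1 :=
            hcaus i (Finset.mem_Icc.mpr hi)
        _ ≤ ζ * ∑ k ∈ Finset.Icc 1 (i-1), h k (Pi k) * q' k + B1 := by
            refine add_le_add ?_ le_rfl
            exact mul_le_mul_of_nonneg_left key hζ.le
  · -- P-full feasible value is UB feasible value
    rintro ⟨q, p, hqnn, hpnn, hbud, hcaus, hr⟩
    refine ⟨fun k n => if n = Pi k then q k else 0, p, ?_, ?_, ?_, ?_, hr⟩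
    · intro k hk n hn
      refine ⟨?_, (hpnn k hk n hn)⟩
      by_cases hc : n = Pi k
      · simp only [hc, if_pos rfl]
        exact (hqnn k hk).1
      · simp [hc]
    · intro n
      by_cases hc : n = Pi K
      · simp only [hc, if_pos rfl]
        exact (hqnn K (Finset.mem_Icc.mpr ⟨hK1, le_refl K⟩)).2 hPiK
      · simp [hc]
    · have hsum : ∀ k ∈ Finset.Icc 1 K,
          ∑ n ∈ Finset.Icc 0 N, (if n = Pi k then q k else 0) = q k := by
        intro k hk
        rw [Finset.sum_ite_eq' (Finset.Icc 0 N) (Pi k) (fun _ => q k)]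
        rw [if_pos]
        by_cases hc : Pi k = 0
        · rw [hc]; exact Finset.mem_Icc.mpr ⟨le_refl 0, Nat.zero_le N⟩
        · obtain ⟨_, heq, hmem⟩ := hPinz k hc
          rw [Finset.mem_Icc] at hmem ⊢
          omega
      rw [Finset.sum_congr rfl hsum]
      exact hbud
    · intro i hi
      rw [Finset.mem_Icc] at hi
      have hsum : ∀ k ∈ Finset.Icc 1 (i-1),
          ∑ n ∈ Finset.Icc 0 N, h k n * (if n = Pi k then q k else 0)
            = h k (Pi k) * q k := by
        intro k hk
        have : ∀ n, h k n * (if n = Pi k then q k else 0)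
            = if n = Pi k then h k n * q k else 0 := by
          intro n
          by_cases hc : n = Pi k <;> simp [hc]
        simp only [this]
        rw [Finset.sum_ite_eq' (Finset.Icc 0 N) (Pi k) (fun n => h k n * q k)]
        rw [if_pos]
        by_cases hc : Pi k = 0
        · rw [hc]; exact Finset.mem_Icc.mpr ⟨le_refl 0, Nat.zero_le N⟩
        · obtain ⟨_, heq, hmem⟩ := hPinz k hc
          rw [Finset.mem_Icc] at hmem ⊢
          omega
      rw [Finset.sum_congr rfl hsum]
      exact hcaus i (Finset.mem_Icc.mpr hi)
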